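/- Let f be a slant surface immersion with |λ| < 1 at a point, and (v₁, v₂ = φ̃ v₁) an orthonormal frame of T_p S. Set e₁ = f_* v₁, e₂ = f_* v₂, e₃ = A f_*(v₂)/c, e₄ = A f_*(v₁)/c with c = √(1−λ²). Then (e₁,e₂,e₃,e₄) is an orthonormal frame with signs (+,−,+,−), and φe₁ = λe₂ + c e₄, φe₂ = λe₁ + c e₃, φe₃ = c e₂ − λ e₄, φe₄ = c e₁ − λ e₃. -/

import Mathlib

/-- Local structure of a slant surface immersion with `|λ| < 1` (Proposition 2,
case (\ref{phi2})): with `(v₁, v₂ = φ̃ v₁)` an orthonormal frame of `T_p S`,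
`e₁ = f_* v₁`, `e₂ = f_* v₂`, `e₃ = A f_*(v₂)/c`, `e₄ = A f_*(v₁)/c`,
`c = √(1−λ²)`, the vectors `(e₁,e₂,e₃,e₄)` form an orthonormal frame with signs
`(+,−,+,−)`, and `φe₁ = λe₂ + c e₄`, `φe₂ = λe₁ + c e₃`, `φe₃ = c e₂ − λ e₄`,
`φe₄ = c e₁ − λ e₃`. -/
theorem stmt11 {S V : Type*} [AddCommGroup S] [Module ℝ S]
    [AddCommGroup V] [Module ℝ V] [FiniteDimensional ℝ V]
    (hdimV : Module.finrank ℝ V = 4)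
    (gS : S →ₗ[ℝ] S →ₗ[ℝ] ℝ) (g : V →ₗ[ℝ] V →ₗ[ℝ] ℝ)
    (hgsymm : ∀ x y, g x y = g y x)
    (φS : S →ₗ[ℝ] S) (φ : V →ₗ[ℝ] V)
    (hφS : ∀ v, φS (φS v) = v) (hφ : ∀ x, φ (φ x) = x)
    (hcompat : ∀ x y, g (φ x) (φ y) = - g x y)
    (hScompat : ∀ v w, gS (φS v) (φS w) = - gS v w)
    (f : S →ₗ[ℝ] V) (hiso : ∀ v w, g (f v) (f w) = gS v w)
    (lam : ℝ) (hlam : |lam| < 1) (A : S →ₗ[ℝ] V)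
    (hslant : ∀ v : S, φ (f v) = lam • f (φS v) + A v)
    (hnormal : ∀ v w : S, g (A v) (f w) = 0)
    (c : ℝ) (hc : c = Real.sqrt (1 - lam ^ 2))
    (v₁ v₂ : S) (hv₂ : v₂ = φS v₁)
    (h11 : gS v₁ v₁ = 1) (h22 : gS v₂ v₂ = -1) (h12 : gS v₁ v₂ = 0)
    (e₁ e₂ e₃ e₄ : V)
    (he₁ : e₁ = f v₁) (he₂ : e₂ = f v₂)
    (he₃ : e₃ = c⁻¹ • A v₂) (he₄ : e₄ = c⁻¹ • A v₁) :
    (g e₁ e₁ = 1 ∧ g e₂ e₂ = -1 ∧ g e₃ e₃ = 1 ∧ g e₄ e₄ = -1 ∧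
     g e₁ e₂ = 0 ∧ g e₁ e₃ = 0 ∧ g e₁ e₄ = 0 ∧
     g e₂ e₃ = 0 ∧ g e₂ e₄ = 0 ∧ g e₃ e₄ = 0) ∧
    Submodule.span ℝ {e₁, e₂, e₃, e₄} = ⊤ ∧
    (φ e₁ = lam • e₂ + c • e₄ ∧ φ e₂ = lam • e₁ + c • e₃ ∧
     φ e₃ = c • e₂ - lam • e₄ ∧ φ e₄ = c • e₁ - lam • e₃) := by

  -- basic facts about c
  have hl2 : 1 - lam ^ 2 > 0 := by
    nlinarith [abs_nonneg lam, sq_abs lam, hlam]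
  have hcpos : 0 < c := hc ▸ Real.sqrt_pos.mpr hl2
  have hcne : c ≠ 0 := ne_of_gt hcpos
  have hc2 : c ^ 2 = 1 - lam ^ 2 := by
    rw [hc, Real.sq_sqrt hl2.le]
  -- φ(A v) = (1 - lam²) • f v - lam • A (φS v)
  have hA : ∀ v : S, φ (A v) = (1 - lam ^ 2) • f v - lam • A (φS v) := by
    intro v
    have h := hφ (f v)
    rw [hslant v, map_add, map_smul, hslant (φS v), hφS] at h
    have : φ (A v) = f v - lam • (lam • f v + A (φS v)) := by
      rw [eq_sub_iff_add_eq]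
      linear_combination (norm := module) h
    rw [this]; module
  -- g (A v) (A w) = -(1-lam²) * gS v w
  have hAA : ∀ v w : S, g (A v) (A w) = -(1 - lam ^ 2) * gS v w := by
    intro v w
    have key : ∀ x y : S, g (A x) (A y)
        = -(1 - lam ^ 2) ^ 2 * gS x y - lam ^ 2 * g (A (φS x)) (A (φS y)) := by
      intro x y
      have h0 : g (A x) (A y) = - g (φ (A x)) (φ (A y)) := by
        rw [hcompat]; ring
      rw [hA x, hA y] at h0
      simp only [map_sub, map_smul, LinearMap.sub_apply, LinearMap.smul_apply,
        smul_eq_mul, hiso, hnormal] at h0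
      have hn : g (f x) (A (φS y)) = 0 := by rw [hgsymm]; exact hnormal _ _
      rw [hn] at h0
      linarith [h0]
    have e1 := key v w
    have e2 := key (φS v) (φS w)
    rw [hφS, hφS, hScompat] at e2
    have h4 : (1 : ℝ) - lam ^ 4 ≠ 0 := by nlinarith [hl2]
    have : (1 - lam ^ 4) * g (A v) (A w) = (1 - lam ^ 4) * (-(1 - lam ^ 2) * gS v w) := by
      linear_combination e1 - lam ^ 2 * e2
    exact mul_left_cancel₀ h4 this
  have h21 : gS v₂ v₁ = 0 := by
    rw [← hiso, hgsymm, hiso, h12]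
  -- orthonormality
  have G11 : g e₁ e₁ = 1 := by rw [he₁, hiso, h11]
  have G22 : g e₂ e₂ = -1 := by rw [he₂, hiso, h22]
  have G12 : g e₁ e₂ = 0 := by rw [he₁, he₂, hiso, h12]
  have hgc : ∀ v w : S, g (c⁻¹ • A v) (c⁻¹ • A w) = - gS v w := by
    intro v w
    simp only [map_smul, LinearMap.smul_apply, smul_eq_mul, hAA]
    rw [← hc2]
    field_simp
  have G33 : g e₃ e₃ = 1 := by rw [he₃, hgc, h22]; ring
  have G44 : g e₄ e₄ = -1 := by rw [he₄, hgc, h11]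
  have G34 : g e₃ e₄ = 0 := by rw [he₃, he₄, hgc, h21]; ring
  have G13 : g e₁ e₃ = 0 := by
    rw [he₁, he₃, map_smul, smul_eq_mul, hgsymm, hnormal, mul_zero]
  have G14 : g e₁ e₄ = 0 := by
    rw [he₁, he₄, map_smul, smul_eq_mul, hgsymm, hnormal, mul_zero]
  have G23 : g e₂ e₃ = 0 := by
    rw [he₂, he₃, map_smul, smul_eq_mul, hgsymm, hnormal, mul_zero]
  have G24 : g e₂ e₄ = 0 := by
    rw [he₂, he₄, map_smul, smul_eq_mul, hgsymm, hnormal, mul_zero]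
  have G21 : g e₂ e₁ = 0 := (hgsymm e₂ e₁).trans G12
  have G31 : g e₃ e₁ = 0 := (hgsymm e₃ e₁).trans G13
  have G41 : g e₄ e₁ = 0 := (hgsymm e₄ e₁).trans G14
  have G32 : g e₃ e₂ = 0 := (hgsymm e₃ e₂).trans G23
  have G42 : g e₄ e₂ = 0 := (hgsymm e₄ e₂).trans G24
  have G43 : g e₄ e₃ = 0 := (hgsymm e₄ e₃).trans G34
  -- the φ relations
  have hAv₁ : A v₁ = c • e₄ := by rw [he₄, smul_smul, mul_inv_cancel₀ hcne, one_smul]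
  have hAv₂ : A v₂ = c • e₃ := by rw [he₃, smul_smul, mul_inv_cancel₀ hcne, one_smul]
  have hφSv₂ : φS v₂ = v₁ := by rw [hv₂, hφS]
  have P1 : φ e₁ = lam • e₂ + c • e₄ := by
    rw [he₁, hslant, ← hv₂, ← he₂, hAv₁]
  have P2 : φ e₂ = lam • e₁ + c • e₃ := by
    rw [he₂, hslant, hφSv₂, ← he₁, hAv₂]
  have P3 : φ e₃ = c • e₂ - lam • e₄ := by
    rw [he₃, map_smul, hA, hφSv₂, hAv₁, ← he₂, ← hc2]
    rw [smul_sub, smul_smul, smul_smul, smul_smul]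
    rw [inv_mul_eq_div, inv_mul_eq_div]
    congr 1
    · congr 1
      field_simp
    · congr 1
      field_simp
  have P4 : φ e₄ = c • e₁ - lam • e₃ := by
    rw [he₄, map_smul, hA, hv₂, hAv₂] at *
    rw [← he₁, ← hc2, smul_sub, smul_smul, smul_smul, smul_smul]
    congr 1
    · congr 1
      field_simp
    · congr 1
      field_simp
  refine ⟨⟨G11, G22, G33, G44, G12, G13, G14, G23, G24, G34⟩, ?_, P1, P2, P3, P4⟩
  -- span
  have hsymm' : ∀ i j : Fin 4, g (![e₁,e₂,e₃,e₄] i) (![e₁,e₂,e₃,e₄] j) =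
      g (![e₁,e₂,e₃,e₄] j) (![e₁,e₂,e₃,e₄] i) := fun i j => hgsymm _ _
  have hli : LinearIndependent ℝ ![e₁, e₂, e₃, e₄] := by
    rw [Fintype.linearIndependent_iff]
    intro w hw
    have hw' : w 0 • e₁ + w 1 • e₂ + w 2 • e₃ + w 3 • e₄ = 0 := by
      simpa [Fin.sum_univ_four] using hw
    have k1 : w 0 = 0 := by
      have := congrArg (fun x => g x e₁) hw'
      simp only [map_add, map_smul, LinearMap.add_apply, LinearMap.smul_apply,
        smul_eq_mul, LinearMap.zero_apply, map_zero] at this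
      rw [G11, G21, G31, G41] at this
      linarith
    have k2 : w 1 = 0 := by
      have := congrArg (fun x => g x e₂) hw'
      simp only [map_add, map_smul, LinearMap.add_apply, LinearMap.smul_apply,
        smul_eq_mul, LinearMap.zero_apply, map_zero] at this
      rw [G22, G12, G32, G42] at this
      linarith
    have k3 : w 2 = 0 := by
      have := congrArg (fun x => g x e₃) hw'
      simp only [map_add, map_smul, LinearMap.add_apply, LinearMap.smul_apply,
        smul_eq_mul, LinearMap.zero_apply, map_zero] at this
      rw [G33, G13, G23, G43] at this
      linarith
    have k4 : w 3 = 0 := by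
      have := congrArg (fun x => g x e₄) hw'
      simp only [map_add, map_smul, LinearMap.add_apply, LinearMap.smul_apply,
        smul_eq_mul, LinearMap.zero_apply, map_zero] at this
      rw [G44, G14, G24, G34] at this
      linarith
    intro i; fin_cases i <;> assumption
  have hspan := hli.span_eq_top_of_card_eq_finrank (by simp [hdimV])
  have hr : Set.range ![e₁, e₂, e₃, e₄] = {e₁, e₂, e₃, e₄} := by
    ext x
    constructor
    · rintro ⟨i, rfl⟩; fin_cases i <;> simp
    · intro hx
      simp only [Set.mem_insert_iff, Set.mem_singleton_iff] at hx
      rcases hx with rfl | rfl | rfl | rfl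
      exacts [⟨0, rfl⟩, ⟨1, rfl⟩, ⟨2, rfl⟩, ⟨3, rfl⟩]
  rwa [hr] at hspan
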